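/- Let L be a k-list assignment to a graph G such that G has a unique L-coloring c. Then for every vertex v of G, the number of distinct colors that c assigns to the neighbors of v is at least k - 1. -/

import Mathlib

/-- A coloring `c` of the vertices is proper if adjacent vertices get different colors. -/
def IsProperColoring {V α : Type*} (G : SimpleGraph V) (c : V → α) : Prop :=
  ∀ ⦃u w⦄, G.Adj u w → c u ≠ c w

/-- `c` is an `L`-coloring of `G`: a proper coloring with `c v ∈ L v` for every vertex `v`. -/
def IsListColoring {V : Type*} (G : SimpleGraph V) (L : V → Finset ℕ) (c : V → ℕ) : Prop :=
  IsProperColoring G c ∧ ∀ v, c v ∈ L v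

/-- `G` is uniquely `f`-list colorable: there is a list assignment giving each vertex `v`
a list of exactly `f v` colors, from which `G` has exactly one list coloring. -/
def UniquelyFListColorable {V : Type*} (G : SimpleGraph V) (f : V → ℕ) : Prop :=
  ∃ L : V → Finset ℕ, (∀ v, (L v).card = f v) ∧ ∃! c, IsListColoring G L c

/-- `G` is uniquely `k`-list colorable. -/
def UniquelyKListColorable {V : Type*} (G : SimpleGraph V) (k : ℕ) : Prop :=
  UniquelyFListColorable G (fun _ => k)

/-- The m-number of `G`: the least `k` for which `G` is not uniquely `k`-list colorable. -/
noncomputable def mNumber {V : Type*} (G : SimpleGraph V) : ℕ :=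
  sInf {k | ¬ UniquelyKListColorable G k}

/-- If `L` is a `k`-list assignment to `G` from which `G` has a unique
`L`-coloring `c`, then every vertex sees at least `k - 1` distinct colors on its neighborhood. -/
theorem neighbors_see_many_colors
    {V : Type} [Fintype V] [DecidableEq V] (G : SimpleGraph V) [DecidableRel G.Adj]
    (k : ℕ) (L : V → Finset ℕ) (hL : ∀ v, (L v).card = k)
    (c : V → ℕ) (hc : IsListColoring G L c)
    (huniq : ∀ c', IsListColoring G L c' → c' = c) :
    ∀ v, k - 1 ≤ ((G.neighborFinset v).image c).card := by
  intro v
  set S := (G.neighborFinset v).image c with hS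
  have hsub : L v ⊆ insert (c v) S := by
    intro a ha
    by_contra hna
    simp only [Finset.mem_insert, not_or] at hna
    obtain ⟨hav, haS⟩ := hna
    have hnS : ∀ w, G.Adj v w → a ≠ c w := by
      intro w hw h
      exact haS (Finset.mem_image.mpr ⟨w, (SimpleGraph.mem_neighborFinset G v w).mpr hw, h.symm⟩)
    set c' := Function.update c v a with hc'
    have hlc : IsListColoring G L c' := by
      constructor
      · intro u w huw
        by_cases hu : u = v
        · subst hu
          have hwv : w ≠ u := (G.ne_of_adj huw).symm
          simp only [hc', Function.update_self, Function.update_of_ne hwv]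
          exact hnS w huw
        · by_cases hw : w = v
          · subst hw
            simp only [hc', Function.update_self, Function.update_of_ne hu]
            exact fun h => hnS u (G.adj_symm huw) h.symm
          · simp only [hc', Function.update_of_ne hu, Function.update_of_ne hw]
            exact hc.1 huw
      · intro w
        by_cases hw : w = v
        · subst hw; simpa [hc'] using ha
        · simp only [hc', Function.update_of_ne hw]; exact hc.2 w
    have := huniq c' hlc
    have : c' v = c v := by rw [this]
    simp [hc'] at this
    exact hav this
  have hk : k ≤ (insert (c v) S).card := by
    rw [← hL v]; exact Finset.card_le_card hsub
  have := Finset.card_insert_le (c v) S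
  omega
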